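/- Every eigenvalue of the adjacency matrix of the Johnson graph J(n,w) (for 0 ≤ w ≤ n) equals (w-i)(n-w-i) - i for some i ∈ {0,...,w}. -/

import Mathlib

open Finset Matrix

namespace JohnsonAux

abbrev S (n w : ℕ) := {s : Finset (Fin n) // s.card = w}

noncomputable def J (n w : ℕ) : Matrix (S n w) (S n w) ℝ :=
  Matrix.of fun x y : S n w =>
    if ((x : Finset (Fin n)) ∩ (y : Finset (Fin n))).card + 1 = w then (1 : ℝ) else 0

noncomputable def M (n w : ℕ) : Matrix (S n w) (S n (w+1)) ℝ :=
  Matrix.of fun t s => if (t : Finset (Fin n)) ⊆ (s : Finset (Fin n)) then (1 : ℝ) else 0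

lemma sum_sub (n w : ℕ) (g : Finset (Fin n) → ℝ) :
    ∑ t : S n w, g (t : Finset (Fin n)) = ∑ t ∈ Finset.univ.powersetCard w, g t :=
  (Finset.sum_subtype (Finset.univ.powersetCard w)
    (fun t => by simp [Finset.mem_powersetCard]) g).symm

lemma sum_indicator (n w : ℕ) (X : Finset (Fin n)) :
    ∑ t : S n w, (if (t : Finset (Fin n)) ⊆ X then (1:ℝ) else 0)
      = (X.card.choose w : ℝ) := by
  rw [sum_sub n w (fun t => if t ⊆ X then (1:ℝ) else 0)]
  rw [Finset.sum_boole]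
  have : (Finset.univ.powersetCard w).filter (fun t => t ⊆ X) = X.powersetCard w := by
    ext t; simp [Finset.mem_powersetCard, Finset.mem_filter]; tauto
  rw [this, Finset.card_powersetCard]

lemma sum_superset (n k : ℕ) (u : Finset (Fin n)) :
    ∑ s : S n k, (if u ⊆ (s : Finset (Fin n)) then (1:ℝ) else 0)
      = (((Finset.univ.powersetCard k).filter (fun s => u ⊆ s)).card : ℝ) := by
  rw [sum_sub n k (fun s => if u ⊆ s then (1:ℝ) else 0), Finset.sum_boole]

lemma filter_super_eq (n k : ℕ) (u : Finset (Fin n)) (h : u.card = k) :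
    (Finset.univ.powersetCard k).filter (fun s => u ⊆ s) = {u} := by
  ext s
  simp only [Finset.mem_filter, Finset.mem_powersetCard, Finset.mem_singleton]
  constructor
  · rintro ⟨⟨-, hc⟩, hu⟩
    exact (Finset.eq_of_subset_of_card_le hu (by omega)).symm
  · rintro rfl; exact ⟨⟨Finset.subset_univ _, h⟩, Finset.Subset.refl _⟩

lemma filter_super_gt (n k : ℕ) (u : Finset (Fin n)) (h : k < u.card) :
    (Finset.univ.powersetCard k).filter (fun s => u ⊆ s) = ∅ := by
  ext s
  simp only [Finset.mem_filter, Finset.mem_powersetCard, Finset.notMem_empty, iff_false]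
  rintro ⟨⟨-, hc⟩, hu⟩
  have := Finset.card_le_card hu
  omega

lemma filter_super_succ (n w : ℕ) (u : Finset (Fin n)) (h : u.card = w) :
    ((Finset.univ.powersetCard (w+1)).filter (fun s => u ⊆ s)).card = n - w := by
  have himg : (Finset.univ.powersetCard (w+1)).filter (fun s => u ⊆ s)
      = uᶜ.image (fun a => insert a u) := by
    ext s
    simp only [Finset.mem_filter, Finset.mem_powersetCard, Finset.mem_image,
      Finset.mem_compl]
    constructor
    · rintro ⟨⟨-, hc⟩, hu⟩
      have hcd : (s \ u).card = 1 := by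
        rw [Finset.card_sdiff_of_subset hu]; omega
      obtain ⟨a, ha⟩ := Finset.card_eq_one.mp hcd
      have hau : a ∉ u := by
        have : a ∈ s \ u := ha ▸ Finset.mem_singleton_self a
        exact (Finset.mem_sdiff.mp this).2
      refine ⟨a, hau, ?_⟩
      have : u ∪ s \ u = s := Finset.union_sdiff_of_subset hu
      rw [ha] at this
      rw [← this, Finset.union_comm]
      simp [Finset.insert_eq, -Finset.singleton_union]
    · rintro ⟨a, ha, rfl⟩
      exact ⟨⟨Finset.subset_univ _, by rw [Finset.card_insert_of_notMem ha, h]⟩,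
        Finset.subset_insert _ _⟩
  rw [himg, Finset.card_image_of_injOn, Finset.card_compl, Fintype.card_fin, h]
  intro a ha b hb hab
  simp only [Finset.mem_coe, Finset.mem_compl] at ha hb
  have hab' : insert a u = insert b u := hab
  have : a ∈ insert b u := hab' ▸ Finset.mem_insert_self a u
  rcases Finset.mem_insert.mp this with h' | h'
  · exact h'
  · exact absurd h' ha

lemma MtM (n w : ℕ) :
    (M n w)ᵀ * (M n w)
      = J n (w+1) + ((w : ℝ) + 1) • (1 : Matrix (S n (w+1)) (S n (w+1)) ℝ) := by
  ext s s'
  simp only [Matrix.mul_apply, Matrix.transpose_apply, M, J, Matrix.of_apply,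
    Matrix.add_apply, Matrix.smul_apply, Matrix.one_apply, smul_eq_mul]
  have hmul : ∀ t : S n w,
      (if (t : Finset (Fin n)) ⊆ (s : Finset (Fin n)) then (1:ℝ) else 0)
        * (if (t : Finset (Fin n)) ⊆ (s' : Finset (Fin n)) then (1:ℝ) else 0)
      = if (t : Finset (Fin n)) ⊆ (s : Finset (Fin n)) ∩ (s' : Finset (Fin n))
          then (1:ℝ) else 0 := by
    intro t
    by_cases h1 : (t : Finset (Fin n)) ⊆ (s : Finset (Fin n)) <;>
      by_cases h2 : (t : Finset (Fin n)) ⊆ (s' : Finset (Fin n)) <;>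
      simp [h1, h2, Finset.subset_inter_iff]
  rw [Finset.sum_congr rfl (fun t _ => hmul t), sum_indicator]
  by_cases hss : s = s'
  · subst hss
    have hc : ((s : Finset (Fin n)) ∩ (s : Finset (Fin n))).card = w + 1 := by
      rw [Finset.inter_self]; exact s.2
    rw [hc]
    simp [Nat.choose_succ_self_right]
  · have hne : (s : Finset (Fin n)) ≠ (s' : Finset (Fin n)) := by
      intro h; exact hss (Subtype.ext h)
    have hub : ((s : Finset (Fin n)) ∩ (s' : Finset (Fin n))).card ≤ w := by
      by_contra hlt
      push_neg at hlt
      have h1 : ((s : Finset (Fin n)) ∩ (s' : Finset (Fin n))).card ≤ w + 1 :=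
        le_trans (Finset.card_le_card Finset.inter_subset_left) (le_of_eq s.2)
      have hcard : ((s : Finset (Fin n)) ∩ (s' : Finset (Fin n))).card = w + 1 := by omega
      have h2 : (s : Finset (Fin n)) ∩ (s' : Finset (Fin n)) = (s : Finset (Fin n)) :=
        Finset.eq_of_subset_of_card_le Finset.inter_subset_left (by rw [hcard, s.2])
      have h3 : (s : Finset (Fin n)) ⊆ (s' : Finset (Fin n)) := by
        rw [← h2]; exact Finset.inter_subset_right
      exact hne (Finset.eq_of_subset_of_card_le h3 (by rw [s.2, s'.2]))
    rcases lt_or_eq_of_le hub with hlt | heq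
    · have hcond : ¬ (((s : Finset (Fin n)) ∩ (s' : Finset (Fin n))).card + 1 = w + 1) := by
        omega
      rw [Nat.choose_eq_zero_of_lt hlt]
      simp [hss, hcond]; omega
    · rw [heq]
      simp [hss, Nat.choose_self]

lemma MMt (n w : ℕ) (h : w ≤ n) :
    (M n w) * (M n w)ᵀ
      = J n w + ((n : ℝ) - w) • (1 : Matrix (S n w) (S n w) ℝ) := by
  ext t t'
  simp only [Matrix.mul_apply, Matrix.transpose_apply, M, J, Matrix.of_apply,
    Matrix.add_apply, Matrix.smul_apply, Matrix.one_apply, smul_eq_mul]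
  have hmul : ∀ s : S n (w+1),
      (if (t : Finset (Fin n)) ⊆ (s : Finset (Fin n)) then (1:ℝ) else 0)
        * (if (t' : Finset (Fin n)) ⊆ (s : Finset (Fin n)) then (1:ℝ) else 0)
      = if (t : Finset (Fin n)) ∪ (t' : Finset (Fin n)) ⊆ (s : Finset (Fin n))
          then (1:ℝ) else 0 := by
    intro s
    by_cases h1 : (t : Finset (Fin n)) ⊆ (s : Finset (Fin n)) <;>
      by_cases h2 : (t' : Finset (Fin n)) ⊆ (s : Finset (Fin n)) <;>
      simp [h1, h2, Finset.union_subset_iff]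
  rw [Finset.sum_congr rfl (fun s _ => hmul s), sum_superset]
  by_cases htt : t = t'
  · subst htt
    have hu : (t : Finset (Fin n)) ∪ (t : Finset (Fin n)) = (t : Finset (Fin n)) :=
      Finset.union_self _
    rw [hu, filter_super_succ n w _ t.2]
    have hc : ¬ ((t : Finset (Fin n)).card + 1 = w) := by
      rw [t.2]; omega
    simp [Finset.inter_self, hc, Nat.cast_sub h]
  · have hne : (t : Finset (Fin n)) ≠ (t' : Finset (Fin n)) := by
      intro h'; exact htt (Subtype.ext h')
    set u := (t : Finset (Fin n)) ∪ (t' : Finset (Fin n)) with hu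
    have hcards : u.card + ((t : Finset (Fin n)) ∩ (t' : Finset (Fin n))).card
        = w + w := by
      rw [hu]
      rw [Finset.card_union_add_card_inter, t.2, t'.2]
    have hilt : ((t : Finset (Fin n)) ∩ (t' : Finset (Fin n))).card < w := by
      rcases lt_or_eq_of_le (le_trans (Finset.card_le_card Finset.inter_subset_left)
        (le_of_eq t.2)) with h' | h'
      · exact h'
      · exfalso
        have h2 : (t : Finset (Fin n)) ∩ (t' : Finset (Fin n)) = (t : Finset (Fin n)) :=
          Finset.eq_of_subset_of_card_le Finset.inter_subset_left (by rw [h', t.2])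
        have h3 : (t : Finset (Fin n)) ⊆ (t' : Finset (Fin n)) := by
          rw [← h2]; exact Finset.inter_subset_right
        exact hne (Finset.eq_of_subset_of_card_le h3 (by rw [t.2, t'.2]))
    by_cases hadj : ((t : Finset (Fin n)) ∩ (t' : Finset (Fin n))).card + 1 = w
    · have hucard : u.card = w + 1 := by omega
      rw [filter_super_eq n (w+1) u hucard]
      simp [hadj, htt]
    · have hucard : w + 1 < u.card := by omega
      rw [filter_super_gt n (w+1) u hucard]
      simp [hadj, htt]

lemma key (n : ℕ) : ∀ w : ℕ, w ≤ n → ∀ μ : ℝ,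
    (∃ f : S n w → ℝ, f ≠ 0 ∧ (J n w).mulVec f = μ • f) →
    ∃ i : ℕ, i ≤ w ∧ μ = ((w : ℝ) - i) * ((n : ℝ) - w - i) - i := by
  intro w
  induction w with
  | zero =>
    rintro - μ ⟨f, hf, hef⟩
    refine ⟨0, le_refl 0, ?_⟩
    have hJ : J n 0 = 0 := by
      ext x y; simp [J]
    rw [hJ, Matrix.zero_mulVec] at hef
    obtain ⟨x, hx⟩ := Function.ne_iff.mp hf
    have h0 := congrFun hef x
    simp only [Pi.zero_apply, Pi.smul_apply, smul_eq_mul] at h0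
    have : μ = 0 := by
      rcases mul_eq_zero.mp h0.symm with h | h
      · exact h
      · exact absurd h hx
    simp [this]
  | succ w ih =>
    rintro hwn μ ⟨f, hf, hef⟩
    have h1 : ((M n w)ᵀ * M n w).mulVec f = (μ + ((w : ℝ) + 1)) • f := by
      rw [MtM n w, Matrix.add_mulVec, hef, Matrix.smul_mulVec,
        Matrix.one_mulVec, ← add_smul]
    by_cases h0 : μ + ((w : ℝ) + 1) = 0
    · refine ⟨w + 1, le_refl _, ?_⟩
      have : μ = -((w : ℝ) + 1) := by linarith
      rw [this]; push_cast; ring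
    · set g := (M n w).mulVec f with hg
      have hMg : (M n w)ᵀ.mulVec g = (μ + ((w : ℝ) + 1)) • f := by
        rw [hg, Matrix.mulVec_mulVec]; exact h1
      have hgne : g ≠ 0 := by
        intro hz
        rw [hz, Matrix.mulVec_zero] at hMg
        apply hf
        rcases smul_eq_zero.mp hMg.symm with h | h
        · exact absurd h h0
        · exact h
      have h2 : ((M n w) * (M n w)ᵀ).mulVec g = (μ + ((w : ℝ) + 1)) • g := by
        rw [← Matrix.mulVec_mulVec, hMg, Matrix.mulVec_smul]
      rw [MMt n w (Nat.le_of_succ_le hwn), Matrix.add_mulVec,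
        Matrix.smul_mulVec, Matrix.one_mulVec] at h2
      have h3 : (J n w).mulVec g = (μ + ((w : ℝ) + 1) - ((n : ℝ) - w)) • g := by
        rw [sub_smul, ← h2]; abel
      obtain ⟨i, hi, hmu⟩ := ih (Nat.le_of_succ_le hwn) _ ⟨g, hgne, h3⟩
      refine ⟨i, by omega, ?_⟩
      push_cast at hmu ⊢
      linear_combination hmu

end JohnsonAux

/-- Every eigenvalue of the adjacency matrix of the Johnson graph `J(n,w)` equals
`(w-i)(n-w-i) - i` for some `i ∈ {0,…,w}`. -/
theorem johnson_eigenvalue_form (n w : ℕ) (hwn : w ≤ n) (μ : ℝ)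
    (h : ∃ f : {s : Finset (Fin n) // s.card = w} → ℝ, f ≠ 0 ∧
      Matrix.mulVec
        (Matrix.of fun x y : {s : Finset (Fin n) // s.card = w} =>
          if ((x : Finset (Fin n)) ∩ (y : Finset (Fin n))).card + 1 = w then (1 : ℝ) else 0) f
      = μ • f) :
    ∃ i : ℕ, i ≤ w ∧ μ = ((w : ℝ) - i) * ((n : ℝ) - w - i) - i :=
  JohnsonAux.key n w hwn μ h
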